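/- A 2×2 complex matrix H is PT-symmetric (i.e., H·P·T = P·T·conj(H) for matrices P, T with P² = I, T·conj(T) = I, P·T = T·conj(P)) only if H is similar to a real matrix. -/
import Mathlib

open Matrix

theorem pt_symmetric_similar_real
    (P T H : Matrix (Fin 2) (Fin 2) ℂ)
    (hP : P * P = 1)
    (hT : T * T.map (starRingEnd ℂ) = 1)
    (hPT : P * T = T * P.map (starRingEnd ℂ))
    (hH : H * (P * T) = (P * T) * H.map (starRingEnd ℂ)) :
    ∃ (Ψ R : Matrix (Fin 2) (Fin 2) ℂ), IsUnit Ψ.det ∧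
      (∀ i j, (R i j).im = 0) ∧ Ψ⁻¹ * H * Ψ = R := by
  set S := P * T with hSdef
  have hS : S * S.map (starRingEnd ℂ) = 1 := by
    rw [hSdef, Matrix.map_mul]
    calc P * T * (P.map (starRingEnd ℂ) * T.map (starRingEnd ℂ))
        = P * (T * P.map (starRingEnd ℂ)) * T.map (starRingEnd ℂ) := by
          noncomm_ring
      _ = P * (P * T) * T.map (starRingEnd ℂ) := by rw [← hPT]
      _ = (P * P) * (T * T.map (starRingEnd ℂ)) := by noncomm_ring
      _ = 1 := by rw [hP, hT, one_mul]
  have hS' : S.map (starRingEnd ℂ) * S = 1 := mul_eq_one_comm.mp hS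
  have hHc : H.map (starRingEnd ℂ) * S.map (starRingEnd ℂ) = S.map (starRingEnd ℂ) * H := by
    have h := congrArg (fun M => M.map (starRingEnd ℂ)) hH
    simp only [Matrix.map_mul] at h
    have hdd : (H.map (starRingEnd ℂ)).map (starRingEnd ℂ) = H := by
      ext i j; simp [Matrix.map_apply]
    rw [hdd] at h
    exact h
  -- main lemma
  have main : ∀ Ψ : Matrix (Fin 2) (Fin 2) ℂ,
      S * Ψ.map (starRingEnd ℂ) = Ψ → Ψ.det ≠ 0 →
      ∃ (Ψ' R : Matrix (Fin 2) (Fin 2) ℂ), IsUnit Ψ'.det ∧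
        (∀ i j, (R i j).im = 0) ∧ Ψ'⁻¹ * H * Ψ' = R := by
    intro Ψ hfix hdet
    have hu : IsUnit Ψ.det := isUnit_iff_ne_zero.mpr hdet
    refine ⟨Ψ, Ψ⁻¹ * H * Ψ, hu, ?_, rfl⟩
    have hSc_inv : (S.map (starRingEnd ℂ))⁻¹ = S := Matrix.inv_eq_right_inv hS'
    have hΨc : Ψ.map (starRingEnd ℂ) = S.map (starRingEnd ℂ) * Ψ := by
      conv_lhs => rw [← hfix]
      rw [Matrix.map_mul]
      congr 1
      ext i j; simp [Matrix.map_apply]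
    have hΨinv_c : (Ψ⁻¹).map (starRingEnd ℂ) = (Ψ.map (starRingEnd ℂ))⁻¹ := by
      refine (Matrix.inv_eq_right_inv ?_).symm
      rw [← Matrix.map_mul, Matrix.mul_nonsing_inv Ψ hu]
      exact Matrix.map_one _ (map_zero _) (map_one _)
    have hRc : (Ψ⁻¹ * H * Ψ).map (starRingEnd ℂ) = Ψ⁻¹ * H * Ψ := by
      rw [Matrix.map_mul, Matrix.map_mul, hΨinv_c, hΨc, Matrix.mul_inv_rev, hSc_inv]
      calc Ψ⁻¹ * S * H.map (starRingEnd ℂ) * (S.map (starRingEnd ℂ) * Ψ)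
          = Ψ⁻¹ * S * (H.map (starRingEnd ℂ) * S.map (starRingEnd ℂ)) * Ψ := by
            noncomm_ring
        _ = Ψ⁻¹ * S * (S.map (starRingEnd ℂ) * H) * Ψ := by rw [hHc]
        _ = Ψ⁻¹ * (S * S.map (starRingEnd ℂ)) * H * Ψ := by noncomm_ring
        _ = Ψ⁻¹ * H * Ψ := by rw [hS]; rw [mul_one]
    intro i j
    have h := congrFun (congrFun hRc i) j
    simp only [Matrix.map_apply] at h
    exact Complex.conj_eq_iff_im.mp h
  -- fixed point property of the candidates
  have fixgen : ∀ c : ℂ,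
      S * ((c • (1 : Matrix (Fin 2) (Fin 2) ℂ) + (starRingEnd ℂ c) • S).map (starRingEnd ℂ))
        = c • (1 : Matrix (Fin 2) (Fin 2) ℂ) + (starRingEnd ℂ c) • S := by
    intro c
    have hmap : ((c • (1 : Matrix (Fin 2) (Fin 2) ℂ) + (starRingEnd ℂ c) • S).map (starRingEnd ℂ))
        = (starRingEnd ℂ c) • (1 : Matrix (Fin 2) (Fin 2) ℂ) + c • S.map (starRingEnd ℂ) := by
      ext i j
      simp [Matrix.map_apply, Matrix.one_apply]
      split <;> simp
    rw [hmap, Matrix.mul_add, Matrix.mul_smul, Matrix.mul_smul, mul_one, hS, add_comm]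
  -- case analysis on determinants
  by_cases h1 : ((1:ℂ) • (1 : Matrix (Fin 2) (Fin 2) ℂ) + (starRingEnd ℂ 1) • S).det = 0
  · by_cases h2 : (Complex.I • (1 : Matrix (Fin 2) (Fin 2) ℂ) + (starRingEnd ℂ Complex.I) • S).det = 0
    · by_cases h3 : ((1+Complex.I) • (1 : Matrix (Fin 2) (Fin 2) ℂ) + (starRingEnd ℂ (1+Complex.I)) • S).det = 0
      · exfalso
        simp only [Matrix.det_fin_two, Matrix.add_apply, Matrix.smul_apply, Matrix.one_apply,
          smul_eq_mul, RingHom.map_one, Complex.conj_I, RingHom.map_add] at h1 h2 h3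
        norm_num at h1 h2 h3
        have hI : Complex.I * Complex.I = -1 := Complex.I_mul_I
        have h4 : (4:ℂ) * Complex.I = 0 := by
          linear_combination (Complex.I - 1) * h1 + (-Complex.I - 1) * h2 + h3 +
            (Complex.I * (1 - (S 0 0 + S 1 1) + (S 0 0 * S 1 1 - S 0 1 * S 1 0))) * hI
        simp [Complex.ext_iff] at h4
      · exact main _ (fixgen (1+Complex.I)) h3
    · exact main _ (fixgen Complex.I) h2
  · exact main _ (fixgen 1) h1
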